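/- For λ ∈ Q', the formal sum ξ^λ = Σ_{w∈W}(−1)^{ℓ(w)} e^{w∘λ} is non-zero if and only if the stabilizer W_λ^∘ = {w ∈ W : w∘λ = λ} of λ under the circle action is trivial. -/

import Mathlib

open scoped Classical

noncomputable section

/-- An axiomatization of the root datum of a Kac--Moody algebra `𝔤` associated to an
`n × n` generalized Cartan matrix, realized on the lattice `V` of integral weights
(the subgroup of `𝔥*` spanned by the weight lattice `P`, the root lattice `Q` and a
Weyl vector).  `alpha i` are the simple roots, `pair i v = v(α_i^∨)` is the pairing
with the simple coroots, and `mult β = dim 𝔤_β` is the root multiplicity function.  -/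
structure KacMoody (n : ℕ) (V : Type) [AddCommGroup V] where
  /-- the simple roots `α_i` -/
  alpha : Fin n → V
  /-- the pairing with the simple coroots, `pair i v = v(α_i^∨)` -/
  pair : Fin n → V →+ ℤ
  /-- the diagonal entries of the generalized Cartan matrix `a_{ij} = pair i (alpha j)` are `2` -/
  pair_self : ∀ i, pair i (alpha i) = 2
  /-- the off-diagonal entries of the generalized Cartan matrix are nonpositive -/
  pair_offdiag : ∀ i j, i ≠ j → pair i (alpha j) ≤ 0
  /-- `a_{ij} = 0 → a_{ji} = 0` -/
  pair_zero_iff : ∀ i j, pair i (alpha j) = 0 → pair j (alpha i) = 0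
  /-- the simple roots are linearly independent -/
  indep : ∀ c : Fin n → ℤ, ∑ i, c i • alpha i = 0 → ∀ i, c i = 0
  /-- root multiplicities: `mult β = dim 𝔤_β`; `β ≠ 0` is a root iff `mult β ≠ 0` -/
  mult : V → ℕ
  /-- simple roots are roots of multiplicity one -/
  mult_simple : ∀ i, mult (alpha i) = 1
  /-- every root is positive or negative -/
  root_pm : ∀ β : V, mult β ≠ 0 → β ≠ 0 →
    (∃ c : Fin n → ℕ, β = ∑ i, c i • alpha i) ∨ (∃ c : Fin n → ℕ, β = -∑ i, c i • alpha i)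
  /-- multiplicities are invariant under the simple reflections (hence under the Weyl group) -/
  mult_reflect : ∀ (i) (v : V), mult (v - pair i v • alpha i) = mult v
  /-- a given `μ` admits only finitely many partitions into positive roots (counted
  with multiplicity); this is automatic for genuine Kac--Moody root systems -/
  part_finite : ∀ μ : V,
    {p : Finset (V × ℕ) |
      (∀ x ∈ p, (mult x.1 ≠ 0 ∧ x.1 ≠ 0 ∧ x.1 ∈ {v : V | ∃ c : Fin n → ℕ,
          v = ∑ i, c i • alpha i}) ∧ 1 ≤ x.2 ∧ x.2 ≤ mult x.1) ∧
        ∑ x ∈ p, x.1 = μ}.Finite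

/-- the multiplicative group structure on `AddAut M` (composition), as in the older Mathlib -/
instance addAutMulGroup (M : Type*) [Add M] : Group (AddAut M) where
  mul g h := AddEquiv.trans h g
  one := AddEquiv.refl _
  inv := AddEquiv.symm
  mul_assoc _ _ _ := rfl
  one_mul _ := rfl
  mul_one _ := rfl
  inv_mul_cancel := AddEquiv.self_trans_symm

namespace KacMoody

variable {n : ℕ} {V : Type} [AddCommGroup V] (K : KacMoody n V)

/-- the positive root cone `Q⁺` (the `ℕ`-span of the simple roots) -/
def QP : Set V := {v | ∃ c : Fin n → ℕ, v = ∑ i, c i • K.alpha i}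

/-- `β` is a positive root of `𝔤` -/
def IsPosRoot (β : V) : Prop := K.mult β ≠ 0 ∧ β ≠ 0 ∧ β ∈ K.QP

/-- the underlying function of the simple reflection `s_i` -/
def sAux (i : Fin n) : V → V := fun v => v - K.pair i v • K.alpha i

lemma sAux_add (i : Fin n) (a b : V) : K.sAux i (a + b) = K.sAux i a + K.sAux i b := by
  simp only [sAux, map_add, add_smul]; abel

lemma sAux_invol (i : Fin n) : Function.Involutive (K.sAux i) := by
  intro v
  simp only [sAux, map_sub, map_zsmul, K.pair_self i, smul_eq_mul]
  have h2 : K.pair i v - K.pair i v * 2 = -(K.pair i v) := by ring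
  rw [h2, neg_smul, sub_neg_eq_add]
  abel

/-- the simple reflection `s_i`, as an automorphism of the weight lattice -/
def s (i : Fin n) : AddAut V :=
  { toFun := K.sAux i
    invFun := K.sAux i
    left_inv := K.sAux_invol i
    right_inv := K.sAux_invol i
    map_add' := K.sAux_add i }

/-- the Weyl group `W` of `𝔤`, realized as the subgroup of `Aut(𝔥*)` generated by the
simple reflections -/
def Wgrp : Subgroup (AddAut V) := Subgroup.closure (Set.range K.s)

/-- the length `ℓ(w)` of an element of the Weyl group: the minimal length of an
expression of `w` as a product of simple reflections -/
def len (w : AddAut V) : ℕ :=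
  sInf {k | ∃ l : List (Fin n), l.length = k ∧ (l.map K.s).prod = w}

/-- the set `P⁺` of dominant integral weights -/
def Pplus : Set V := {v | ∀ i, 0 ≤ K.pair i v}

/-- `β` is a real root: it is `W`-conjugate to a simple root -/
def IsRealRoot (β : V) : Prop := ∃ w ∈ K.Wgrp, ∃ i, w (K.alpha i) = β

/-- `β` is an imaginary root: a root that is not real -/
def IsImRoot (β : V) : Prop := K.mult β ≠ 0 ∧ β ≠ 0 ∧ ¬K.IsRealRoot β

/-- the cone `Q⁻_im` generated by the negative imaginary roots -/
def coneIm : Set V :=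
  (AddSubmonoid.closure {v : V | K.IsImRoot v ∧ -v ∈ K.QP} : AddSubmonoid V)

/-- the element of `Q⁺` with coordinates `c` in the basis of simple roots -/
def toV (c : Fin n →₀ ℕ) : V := ∑ i, c i • K.alpha i

/-- the coordinates of an element of `Q⁺` in the basis of simple roots -/
def coordOf (v : V) : Fin n →₀ ℕ :=
  if h : ∃ c : Fin n →₀ ℕ, K.toV c = v then h.choose else 0

/-- `p` is an admissible partition of `μ`: a finite subset of
`𝒫 = {(α, i) : α ∈ Φ⁺, 1 ≤ i ≤ mult α}` whose parts sum to `μ` -/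
def IsPart (μ : V) (p : Finset (V × ℕ)) : Prop :=
  (∀ x ∈ p, (K.mult x.1 ≠ 0 ∧ x.1 ≠ 0 ∧ x.1 ∈ K.QP) ∧ 1 ≤ x.2 ∧ x.2 ≤ K.mult x.1) ∧
    ∑ x ∈ p, x.1 = μ

lemma isPart_finite (μ : V) : {p : Finset (V × ℕ) | K.IsPart μ p}.Finite := K.part_finite μ

/-- the finite set `𝒫(μ)` of admissible partitions of `μ` -/
def partsFinset (μ : V) : Finset (Finset (V × ℕ)) := (K.isPart_finite μ).toFinset

/-- the Kim--Lee function `H(μ; q) = Σ_{𝔭 ∈ 𝒫(μ)} (-q)^{|𝔭|}`, i.e. the coefficient of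
`e^{-μ}` in `Π_{α ∈ Φ⁺} (1 - q e^{-α})^{mult α}` -/
def H (μ : V) : Polynomial ℤ := ∑ p ∈ K.partsFinset μ, (-Polynomial.X) ^ p.card

/-- the Weyl denominator `Π_{α ∈ Φ⁺} (1 - e^{-α})^{mult α}`, expanded as a formal sum;
the coefficient at `c` is the coefficient of `e^{-toV c}` -/
def den : MvPowerSeries (Fin n) ℤ :=
  fun c => ∑ p ∈ K.partsFinset (K.toV c), (-1 : ℤ) ^ p.card

/-- `ξ^λ = Σ_{w ∈ W} (-1)^{ℓ(w)} e^{w∘λ}` as a formal sum supported on `Q⁻`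
(for `λ ∈ Q'`); the coefficient at `c` is the coefficient of `e^{-toV c}` -/
def xiMv (ρ lam : V) : MvPowerSeries (Fin n) ℤ :=
  fun c => ∑ᶠ w ∈ {w : AddAut V | w ∈ K.Wgrp ∧ w (lam + ρ) - ρ = -K.toV c},
    (-1 : ℤ) ^ K.len w

/-- the Poincaré series `χ(q) = Σ_{w ∈ W} q^{ℓ(w)}` of the Weyl group -/
def chiPS : PowerSeries ℤ :=
  PowerSeries.mk fun k => (Nat.card {w : AddAut V | w ∈ K.Wgrp ∧ K.len w = k} : ℤ)

/-- the inversion set `Φ(w⁻¹) = {α ∈ Φ⁺ : wα < 0}` -/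
def Inversions (w : AddAut V) : Set V := {β | K.IsPosRoot β ∧ -(w β) ∈ K.QP}

/-- the number of inversions of `w`, counted with multiplicity -/
def NInv (w : AddAut V) : ℕ := ∑ᶠ β ∈ K.Inversions w, K.mult β

/-- a finite subset of `𝒫 = {(α, i) : α ∈ Φ⁺, 1 ≤ i ≤ mult α}` -/
def IsChoice (p : Finset (V × ℕ)) : Prop :=
  ∀ x ∈ p, K.IsPosRoot x.1 ∧ 1 ≤ x.2 ∧ x.2 ≤ K.mult x.1

/-- the formal sum expansion of `Δ^w`, the image of
`Δ = Π_{α ∈ Φ⁺} ((1 - q e^{-α})/(1 - e^{-α}))^{mult α}` under `w ∈ W`: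
`Δ^w = Π_{α ∈ Φ(w⁻¹)} ((q - e^{-α})/(1 - e^{-α})) ·
Π_{α ∈ Φ⁺ ∖ Φ(w⁻¹)} ((1 - q e^{-α})/(1 - e^{-α}))^{mult α}`, where numerators are
expanded by choosing a finite subset `pf.1` of `𝒫` and denominators by choosing a
finitely supported multiset `pf.2` on `𝒫`. -/
def deltaW (w : AddAut V) : MvPowerSeries (Fin n) (PowerSeries ℤ) :=
  fun c =>
    ∑ᶠ pf ∈ {pf : Finset (V × ℕ) × ((V × ℕ) →₀ ℕ) |
        K.IsChoice pf.1 ∧ (∀ x ∈ pf.2.support, K.IsPosRoot x.1 ∧ 1 ≤ x.2 ∧ x.2 ≤ K.mult x.1) ∧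
        (∑ x ∈ pf.1, x.1) + (pf.2.sum fun x k => k • x.1) = K.toV c},
      ((-1 : ℤ) ^ pf.1.card) •
        (PowerSeries.X : PowerSeries ℤ) ^
          (K.NInv w + (pf.1.filter fun x => x.1 ∉ K.Inversions w).card
            - (pf.1.filter fun x => x.1 ∈ K.Inversions w).card)

/-- the formal sum `ℳ(q) = Σ_{w ∈ W} Δ^w`, a formal sum supported on `Q⁻` with
coefficients in `ℤ[[q]]`; the coefficient at `c` is the coefficient of `e^{-toV c}` -/
def Mcal : MvPowerSeries (Fin n) (PowerSeries ℤ) :=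
  fun c => PowerSeries.mk fun m =>
    ∑ᶠ w ∈ {w : AddAut V | w ∈ K.Wgrp},
      PowerSeries.coeff m (MvPowerSeries.coeff c (K.deltaW w))

/-- `Q' = ⋂_{w ∈ W} w ∘ Q⁻`, where `∘` is the circle (dot) action `w ∘ λ = w(λ+ρ) - ρ` -/
def Qprime (ρ : V) : Set V := {v | ∀ w ∈ K.Wgrp, -(w (v + ρ) - ρ) ∈ K.QP}

/-- `ξ^λ = Σ_{w ∈ W} (-1)^{ℓ(w)} e^{w∘λ}` as a formal sum on all of `𝔥*`:
`xiFun ρ lam v` is the coefficient of `e^v` -/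
def xiFun (ρ lam : V) : V → ℤ :=
  fun v => ∑ᶠ w ∈ {w : AddAut V | w ∈ K.Wgrp ∧ w (lam + ρ) - ρ = v}, (-1 : ℤ) ^ K.len w

/-- the numerator `Σ_{w ∈ W} (-1)^{ℓ(w)} e^{w(λ+ρ)}` of `π^λ`, as a formal sum:
`numFun ρ lam v` is the coefficient of `e^v` -/
def numFun (ρ lam : V) : V → ℤ :=
  fun v => ∑ᶠ w ∈ {w : AddAut V | w ∈ K.Wgrp ∧ w (lam + ρ) = v}, (-1 : ℤ) ^ K.len w

/-- the map `φ_i : 𝒫(-λ) → 𝒫(-s_i ∘ λ)` on admissible partitions -/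
def phi (i : Fin n) (p : Finset (V × ℕ)) : Finset (V × ℕ) :=
  if ∃ x ∈ p, x.1 = K.alpha i then
    (p.filter fun x => x.1 ≠ K.alpha i).image fun x => (K.s i x.1, x.2)
  else insert (K.alpha i, 1) (p.image fun x => (K.s i x.1, x.2))

/-- `m(𝔭, w) = |𝔭| - 2 ⬝ #{(β, j) ∈ 𝔭 : wβ < 0}` -/
def mpw (w : AddAut V) (p : Finset (V × ℕ)) : ℤ :=
  (p.card : ℤ) - 2 * (p.filter fun x => -(w x.1) ∈ K.QP ∧ w x.1 ≠ 0).card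

/-- `|wβ|`: the positive root among `± wβ` -/
def wabs (w : AddAut V) (β : V) : V := if -(w β) ∈ K.QP then -(w β) else w β

/-- `Σ_{α ∈ Φ(w⁻¹)} mult α • (-wα)`, the forced monomial appearing when `w` acts on the
Weyl denominator -/
def invWt (w : AddAut V) : V := ∑ᶠ β ∈ K.Inversions w, K.mult β • (-(w β))

/-- the series part of the expansion of `w(Π_{α ∈ Φ⁺} (1 - e^{-α})^{mult α})`:
by the defining action `w(1 - e^{-α}) = 1 - e^{-wα}` if `wα > 0` and
`w(1 - e^{-α}) = (-e^{-wα})(1 - e^{wα})` if `wα < 0`, one has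
`w(Π_{α ∈ Φ⁺} (1 - e^{-α})^{mult α}) = (-1)^{NInv w} e^{invWt w} · wDen w`, where
`wDen w = Π_{α ∈ Φ⁺, (α,i) ∈ 𝒫} (1 - e^{-|wα|})`; the coefficient at `c` is the
coefficient of `e^{-toV c}` -/
def wDen (w : AddAut V) : MvPowerSeries (Fin n) ℤ :=
  fun c => ∑ᶠ p ∈ {p : Finset (V × ℕ) | K.IsChoice p ∧
      (∑ x ∈ p, K.wabs w x.1) = K.toV c},
    (-1 : ℤ) ^ p.card

/-- for a word `l = (i_1, …, i_ℓ)`, the root `s_{i_1} ⋯ s_{i_{k-1}} (α_{i_k})` -/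
def prefixRoot (l : List (Fin n)) (k : Fin l.length) : V :=
  ((l.take k).map K.s).prod (K.alpha (l.get k))

end KacMoody

theorem AddAut_mul_apply {V : Type} [AddCommGroup V] (g h : AddAut V) (x : V) :
    (g * h) x = g (h x) := rfl

theorem AddAut_one_apply {V : Type} [AddCommGroup V] (x : V) : (1 : AddAut V) x = x := rfl

namespace KacMoody

variable {n : ℕ} {V : Type} [AddCommGroup V] (K : KacMoody n V)

lemma s_apply (i : Fin n) (v : V) : K.s i v = v - K.pair i v • K.alpha i := rfl

lemma alpha_ne_zero (i : Fin n) : K.alpha i ≠ 0 := by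
  intro h
  have h2 := K.pair_self i
  rw [h, map_zero] at h2
  norm_num at h2

lemma s_mul_self (i : Fin n) : K.s i * K.s i = 1 := by
  ext v
  exact K.sAux_invol i v

lemma s_inv (i : Fin n) : (K.s i)⁻¹ = K.s i :=
  inv_eq_of_mul_eq_one_right (K.s_mul_self i)

lemma s_mem (i : Fin n) : K.s i ∈ K.Wgrp :=
  Subgroup.subset_closure ⟨i, rfl⟩

/-- the product of the word `l` -/
def wp (l : List (Fin n)) : AddAut V := (l.map K.s).prod

lemma wp_nil : K.wp ([] : List (Fin n)) = 1 := rfl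

lemma wp_cons (i : Fin n) (l : List (Fin n)) : K.wp (i :: l) = K.s i * K.wp l := by
  simp [wp]

lemma wp_singleton (i : Fin n) : K.wp [i] = K.s i := by simp [wp]

lemma wp_append (l₁ l₂ : List (Fin n)) : K.wp (l₁ ++ l₂) = K.wp l₁ * K.wp l₂ := by
  simp [wp]

lemma wp_mem (l : List (Fin n)) : K.wp l ∈ K.Wgrp := by
  induction l with
  | nil => exact one_mem _
  | cons i l ih => rw [wp_cons]; exact mul_mem (K.s_mem i) ih

lemma wp_reverse (l : List (Fin n)) : K.wp l.reverse = (K.wp l)⁻¹ := by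
  induction l with
  | nil => simp [wp]
  | cons i l ih =>
      rw [List.reverse_cons, wp_append, ih, wp_singleton, wp_cons, mul_inv_rev, K.s_inv]

lemma exists_word {w : AddAut V} (hw : w ∈ K.Wgrp) : ∃ l : List (Fin n), K.wp l = w := by
  induction hw using Subgroup.closure_induction with
  | mem x hx =>
      obtain ⟨i, rfl⟩ := hx
      exact ⟨[i], K.wp_singleton i⟩
  | one => exact ⟨[], rfl⟩
  | mul x y hx hy ihx ihy =>
      obtain ⟨l₁, rfl⟩ := ihx
      obtain ⟨l₂, rfl⟩ := ihy
      exact ⟨l₁ ++ l₂, K.wp_append l₁ l₂⟩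
  | inv x hx ihx =>
      obtain ⟨l, rfl⟩ := ihx
      exact ⟨l.reverse, K.wp_reverse l⟩


/-! ### Coordinates on the root lattice -/

/-- membership in the root lattice `Q` -/
def InQZ (v : V) : Prop := ∃ c : Fin n → ℤ, v = ∑ i, c i • K.alpha i

lemma coords_unique {c c' : Fin n → ℤ}
    (h : ∑ i, c i • K.alpha i = ∑ i, c' i • K.alpha i) : c = c' := by
  funext i
  have h0 : ∑ i, (c i - c' i) • K.alpha i = 0 := by
    simp only [sub_smul, Finset.sum_sub_distrib, h, sub_self]
  have h1 := K.indep _ h0 i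
  omega

/-- the coordinates of an element of the root lattice -/
def coordZ (v : V) : Fin n → ℤ := if h : K.InQZ v then h.choose else 0

lemma coordZ_spec {v : V} (h : K.InQZ v) : v = ∑ i, K.coordZ v i • K.alpha i := by
  rw [coordZ, dif_pos h]
  exact h.choose_spec

lemma coordZ_eq {v : V} {c : Fin n → ℤ} (h : v = ∑ i, c i • K.alpha i) :
    K.coordZ v = c :=
  K.coords_unique ((K.coordZ_spec ⟨c, h⟩).symm.trans h)

lemma sum_single_smul (j : Fin n) :
    ∑ i, (Pi.single j (1 : ℤ) : Fin n → ℤ) i • K.alpha i = K.alpha j := by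
  rw [Finset.sum_eq_single j]
  · simp
  · intro b _ hb
    simp [Pi.single_apply, hb]
  · intro h
    exact absurd (Finset.mem_univ j) h

lemma inQZ_alpha (i : Fin n) : K.InQZ (K.alpha i) :=
  ⟨Pi.single i 1, (K.sum_single_smul i).symm⟩

lemma coordZ_alpha (j : Fin n) : K.coordZ (K.alpha j) = Pi.single j 1 :=
  K.coordZ_eq (K.sum_single_smul j).symm

lemma inQZ_zero : K.InQZ (0 : V) := ⟨0, by simp⟩

lemma coordZ_zero : K.coordZ (0 : V) = 0 := K.coordZ_eq (by simp)

lemma inQZ_add {a b : V} (ha : K.InQZ a) (hb : K.InQZ b) : K.InQZ (a + b) := by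
  obtain ⟨c, rfl⟩ := ha
  obtain ⟨d, rfl⟩ := hb
  exact ⟨c + d, by simp [add_smul, Finset.sum_add_distrib]⟩

lemma inQZ_neg {a : V} (ha : K.InQZ a) : K.InQZ (-a) := by
  obtain ⟨c, rfl⟩ := ha
  exact ⟨-c, by simp [neg_smul]⟩

lemma inQZ_sub {a b : V} (ha : K.InQZ a) (hb : K.InQZ b) : K.InQZ (a - b) := by
  rw [sub_eq_add_neg]
  exact K.inQZ_add ha (K.inQZ_neg hb)

lemma inQZ_zsmul (k : ℤ) {a : V} (ha : K.InQZ a) : K.InQZ (k • a) := by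
  obtain ⟨c, rfl⟩ := ha
  refine ⟨fun i => k * c i, ?_⟩
  rw [Finset.smul_sum]
  apply Finset.sum_congr rfl
  intro i _
  rw [smul_smul]

lemma coordZ_add {a b : V} (ha : K.InQZ a) (hb : K.InQZ b) :
    K.coordZ (a + b) = K.coordZ a + K.coordZ b := by
  apply K.coordZ_eq
  calc a + b = (∑ i, K.coordZ a i • K.alpha i) + ∑ i, K.coordZ b i • K.alpha i := by
        rw [← K.coordZ_spec ha, ← K.coordZ_spec hb]
    _ = ∑ i, (K.coordZ a i + K.coordZ b i) • K.alpha i := by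
        simp [add_smul, Finset.sum_add_distrib]

lemma coordZ_neg {a : V} (ha : K.InQZ a) : K.coordZ (-a) = -K.coordZ a := by
  apply K.coordZ_eq
  conv_lhs => rw [K.coordZ_spec ha]
  simp [neg_smul]

lemma coordZ_zsmul (k : ℤ) {a : V} (ha : K.InQZ a) :
    K.coordZ (k • a) = fun i => k * K.coordZ a i := by
  apply K.coordZ_eq
  conv_lhs => rw [K.coordZ_spec ha]
  rw [Finset.smul_sum]
  apply Finset.sum_congr rfl
  intro i _
  rw [smul_smul]

lemma mem_QP_iff {v : V} : v ∈ K.QP ↔ K.InQZ v ∧ ∀ i, 0 ≤ K.coordZ v i := by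
  constructor
  · rintro ⟨c, rfl⟩
    have h : (∑ i, c i • K.alpha i : V) = ∑ i, ((c i : ℤ)) • K.alpha i := by
      apply Finset.sum_congr rfl
      intro i _
      rw [natCast_zsmul]
    refine ⟨⟨fun i => (c i : ℤ), h⟩, ?_⟩
    rw [K.coordZ_eq h]
    intro i
    exact Int.natCast_nonneg _
  · rintro ⟨hq, hc⟩
    refine ⟨fun i => (K.coordZ v i).toNat, ?_⟩
    conv_lhs => rw [K.coordZ_spec hq]
    apply Finset.sum_congr rfl
    intro i _
    rw [← natCast_zsmul, Int.toNat_of_nonneg (hc i)]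

lemma QP_zero : (0 : V) ∈ K.QP := ⟨0, by simp⟩

/-! ### Height -/

/-- the height of an element of the root lattice -/
def htZ (v : V) : ℤ := ∑ i, K.coordZ v i

lemma htZ_add {a b : V} (ha : K.InQZ a) (hb : K.InQZ b) :
    K.htZ (a + b) = K.htZ a + K.htZ b := by
  rw [htZ, htZ, htZ, K.coordZ_add ha hb]
  simp [Finset.sum_add_distrib]

lemma htZ_neg {a : V} (ha : K.InQZ a) : K.htZ (-a) = -K.htZ a := by
  rw [htZ, htZ, K.coordZ_neg ha]
  simp

lemma htZ_alpha (i : Fin n) : K.htZ (K.alpha i) = 1 := by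
  rw [htZ, K.coordZ_alpha]
  rw [Finset.sum_eq_single i]
  · simp
  · intro b _ hb
    simp [Pi.single_apply, hb]
  · intro h
    exact absurd (Finset.mem_univ i) h

lemma htZ_zsmul (k : ℤ) {a : V} (ha : K.InQZ a) : K.htZ (k • a) = k * K.htZ a := by
  rw [htZ, htZ, K.coordZ_zsmul k ha, Finset.mul_sum]

lemma htZ_nonneg {v : V} (h : v ∈ K.QP) : 0 ≤ K.htZ v := by
  rw [K.mem_QP_iff] at h
  exact Finset.sum_nonneg fun i _ => h.2 i

lemma eq_zero_of_htZ_eq_zero {v : V} (h : v ∈ K.QP) (h0 : K.htZ v = 0) : v = 0 := by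
  rw [K.mem_QP_iff] at h
  have hz : ∀ i ∈ Finset.univ, K.coordZ v i = 0 :=
    (Finset.sum_eq_zero_iff_of_nonneg fun i _ => h.2 i).mp h0
  have := K.coordZ_spec h.1
  rw [this]
  apply Finset.sum_eq_zero
  intro i _
  rw [hz i (Finset.mem_univ i), zero_smul]

lemma one_le_htZ {v : V} (h : v ∈ K.QP) (h0 : v ≠ 0) : 1 ≤ K.htZ v := by
  have h1 := K.htZ_nonneg h
  rcases eq_or_lt_of_le h1 with h2 | h2
  · exact absurd (K.eq_zero_of_htZ_eq_zero h h2.symm) h0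
  · omega

lemma root_dichotomy {β : V} (hm : K.mult β ≠ 0) (h0 : β ≠ 0) :
    β ∈ K.QP ∨ -β ∈ K.QP := by
  rcases K.root_pm β hm h0 with ⟨c, h⟩ | ⟨c, h⟩
  · exact Or.inl ⟨c, h⟩
  · exact Or.inr ⟨c, by rw [h, neg_neg]⟩

lemma eq_zero_of_mem_QP_neg_mem_QP {v : V} (h1 : v ∈ K.QP) (h2 : -v ∈ K.QP) : v = 0 := by
  apply K.eq_zero_of_htZ_eq_zero h1
  have ha := K.htZ_nonneg h1
  have hb := K.htZ_nonneg h2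
  rw [K.htZ_neg ((K.mem_QP_iff.mp h1).1)] at hb
  omega

/-! ### Action of the Weyl group on the root lattice -/

lemma mult_s (i : Fin n) (v : V) : K.mult (K.s i v) = K.mult v :=
  K.mult_reflect i v

lemma mult_wp (l : List (Fin n)) (v : V) : K.mult (K.wp l v) = K.mult v := by
  induction l with
  | nil => rfl
  | cons i l ih =>
      rw [wp_cons, AddAut_mul_apply, K.mult_s, ih]

lemma mult_w {w : AddAut V} (hw : w ∈ K.Wgrp) (v : V) : K.mult (w v) = K.mult v := by
  obtain ⟨l, rfl⟩ := K.exists_word hw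
  exact K.mult_wp l v

lemma inQZ_wp_sub (l : List (Fin n)) (v : V) : K.InQZ (K.wp l v - v) := by
  induction l with
  | nil =>
      have h : K.wp ([] : List (Fin n)) v - v = 0 := by
        rw [wp_nil, AddAut_one_apply, sub_self]
      rw [h]
      exact K.inQZ_zero
  | cons i l ih =>
      have key : K.wp (i :: l) v - v =
          (K.wp l v - v) + (-(K.pair i (K.wp l v))) • K.alpha i := by
        rw [wp_cons, AddAut_mul_apply, s_apply, neg_smul]
        abel
      rw [key]
      exact K.inQZ_add ih (K.inQZ_zsmul _ (K.inQZ_alpha i))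

lemma inQZ_w_sub {w : AddAut V} (hw : w ∈ K.Wgrp) (v : V) : K.InQZ (w v - v) := by
  obtain ⟨l, rfl⟩ := K.exists_word hw
  exact K.inQZ_wp_sub l v

lemma inQZ_w_alpha {w : AddAut V} (hw : w ∈ K.Wgrp) (j : Fin n) :
    K.InQZ (w (K.alpha j)) := by
  have h := K.inQZ_w_sub hw (K.alpha j)
  have := K.inQZ_add h (K.inQZ_alpha j)
  simpa using this

lemma w_fixed_of_fixed_alpha {w : AddAut V} (hfix : ∀ j, w (K.alpha j) = K.alpha j)
    {v : V} (hv : K.InQZ v) : w v = v := by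
  obtain ⟨c, rfl⟩ := hv
  rw [map_sum]
  apply Finset.sum_congr rfl
  intro i _
  rw [map_zsmul, hfix]

/-! ### The sign character -/

/-- the matrix of `w` acting on the root lattice -/
def mat (w : AddAut V) : Matrix (Fin n) (Fin n) ℤ :=
  Matrix.of fun k j => K.coordZ (w (K.alpha j)) k

/-- the sign of `w` -/
def sgn (w : AddAut V) : ℤ := (K.mat w).det

lemma mat_one : K.mat (1 : AddAut V) = 1 := by
  ext k j
  show K.coordZ ((1 : AddAut V) (K.alpha j)) k = _
  rw [AddAut_one_apply, K.coordZ_alpha, Matrix.one_apply, Pi.single_apply]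

lemma mat_mul {u w : AddAut V} (hu : u ∈ K.Wgrp) (hw : w ∈ K.Wgrp) :
    K.mat (u * w) = K.mat u * K.mat w := by
  ext k j
  rw [Matrix.mul_apply]
  show K.coordZ ((u * w) (K.alpha j)) k = ∑ l, K.coordZ (u (K.alpha l)) k * K.coordZ (w (K.alpha j)) l
  have key : (u * w) (K.alpha j) =
      ∑ i, (∑ l, K.coordZ (u (K.alpha l)) i * K.coordZ (w (K.alpha j)) l) • K.alpha i := by
    rw [AddAut_mul_apply]
    conv_lhs => rw [K.coordZ_spec (K.inQZ_w_alpha hw j)]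
    rw [map_sum]
    have hterm : ∀ l : Fin n, u (K.coordZ (w (K.alpha j)) l • K.alpha l) =
        ∑ i, (K.coordZ (u (K.alpha l)) i * K.coordZ (w (K.alpha j)) l) • K.alpha i := by
      intro l
      rw [map_zsmul]
      conv_lhs => rw [K.coordZ_spec (K.inQZ_w_alpha hu l)]
      rw [Finset.smul_sum]
      apply Finset.sum_congr rfl
      intro i _
      rw [smul_smul, mul_comm]
    rw [Finset.sum_congr rfl fun l _ => hterm l, Finset.sum_comm]
    apply Finset.sum_congr rfl
    intro y _
    rw [Finset.sum_smul]
  have h2 := K.coordZ_eq key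
  rw [h2]

lemma sgn_one : K.sgn (1 : AddAut V) = 1 := by
  rw [sgn, mat_one, Matrix.det_one]

lemma sgn_mul {u w : AddAut V} (hu : u ∈ K.Wgrp) (hw : w ∈ K.Wgrp) :
    K.sgn (u * w) = K.sgn u * K.sgn w := by
  rw [sgn, sgn, sgn, K.mat_mul hu hw, Matrix.det_mul]

lemma sgn_s (i : Fin n) : K.sgn (K.s i) = -1 := by
  have hmat : K.mat (K.s i) = 1 + Matrix.replicateCol Unit (-(Pi.single i 1 : Fin n → ℤ)) *
      Matrix.replicateRow Unit (fun j => K.pair i (K.alpha j)) := by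
    ext k j
    have hrep : K.s i (K.alpha j) =
        ∑ m, ((Pi.single j 1 : Fin n → ℤ) m -
          K.pair i (K.alpha j) * (Pi.single i 1 : Fin n → ℤ) m) • K.alpha m := by
      rw [s_apply]
      have : ∀ m ∈ Finset.univ, ((Pi.single j 1 : Fin n → ℤ) m -
          K.pair i (K.alpha j) * (Pi.single i 1 : Fin n → ℤ) m) • K.alpha m
          = (Pi.single j 1 : Fin n → ℤ) m • K.alpha m -
            K.pair i (K.alpha j) • ((Pi.single i 1 : Fin n → ℤ) m • K.alpha m) := by
        intro m _
        rw [sub_smul, smul_smul]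
      rw [Finset.sum_congr rfl this, Finset.sum_sub_distrib, ← Finset.smul_sum,
        K.sum_single_smul, K.sum_single_smul]
    show K.coordZ (K.s i (K.alpha j)) k = _
    rw [K.coordZ_eq hrep]
    simp only [Matrix.add_apply, Matrix.mul_apply, Finset.univ_unique, Finset.sum_singleton,
      Matrix.replicateCol_apply, Matrix.replicateRow_apply, Matrix.one_apply, Pi.neg_apply, Pi.single_apply]
    by_cases h : k = j <;> by_cases h2 : k = i <;> simp [h, h2, eq_comm] <;> ring
  rw [sgn, hmat, Matrix.det_one_add_replicateCol_mul_replicateRow]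
  have hdot : dotProduct (fun j => K.pair i (K.alpha j))
      (-(Pi.single i 1 : Fin n → ℤ)) = -2 := by
    rw [dotProduct, Finset.sum_eq_single i]
    · simp [K.pair_self i]
    · intro b _ hb
      simp [Pi.single_apply, hb]
    · intro h
      exact absurd (Finset.mem_univ i) h
  rw [hdot]
  norm_num

lemma sgn_wp (l : List (Fin n)) : K.sgn (K.wp l) = (-1 : ℤ) ^ l.length := by
  induction l with
  | nil => exact K.sgn_one
  | cons i l ih =>
      rw [wp_cons, K.sgn_mul (K.s_mem i) (K.wp_mem l), K.sgn_s, ih, List.length_cons]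
      ring

lemma sgn_eq_len {w : AddAut V} (hw : w ∈ K.Wgrp) : K.sgn w = (-1 : ℤ) ^ K.len w := by
  have hne : {k | ∃ l : List (Fin n), l.length = k ∧ (l.map K.s).prod = w}.Nonempty := by
    obtain ⟨l, hl⟩ := K.exists_word hw
    exact ⟨l.length, l, rfl, hl⟩
  obtain ⟨l, hlen, hprod⟩ := Nat.sInf_mem hne
  have hw2 : K.wp l = w := hprod
  have hsgn : K.sgn w = (-1 : ℤ) ^ l.length := by rw [← hw2, K.sgn_wp]
  rw [hsgn, hlen]
  rfl

lemma len_one : K.len (1 : AddAut V) = 0 :=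
  Nat.sInf_eq_zero.mpr (Or.inl ⟨[], rfl, rfl⟩)


/-! ### Root combinatorics -/

lemma alpha_mem_QP (i : Fin n) : K.alpha i ∈ K.QP := by
  refine ⟨Pi.single i 1, ?_⟩
  rw [Finset.sum_eq_single i]
  · simp
  · intro b _ hb
    simp [Pi.single_apply, hb]
  · intro h
    exact absurd (Finset.mem_univ i) h

lemma alpha_injective {j k : Fin n} (h : K.alpha j = K.alpha k) : j = k := by
  have h2 : (Pi.single j 1 : Fin n → ℤ) = Pi.single k 1 := by
    rw [← K.coordZ_alpha, ← K.coordZ_alpha, h]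
  by_contra hne
  have h3 := congrFun h2 j
  simp [Pi.single_apply, hne] at h3

lemma smul_alpha_rep (t : ℤ) (a : Fin n) :
    t • K.alpha a = ∑ i, (t * (Pi.single a 1 : Fin n → ℤ) i) • K.alpha i := by
  calc t • K.alpha a = t • ∑ i, (Pi.single a 1 : Fin n → ℤ) i • K.alpha i := by
        rw [K.sum_single_smul]
    _ = _ := by
        rw [Finset.smul_sum]
        exact Finset.sum_congr rfl fun i _ => (smul_smul t _ _)

lemma eq_smul_alpha_of_s_neg {β : V} (a : Fin n) (hβ : β ∈ K.QP) (hβ0 : β ≠ 0)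
    (hneg : -(K.s a β) ∈ K.QP) : ∃ c : ℤ, 1 ≤ c ∧ β = c • K.alpha a := by
  obtain ⟨hq, hc⟩ := K.mem_QP_iff.mp hβ
  have hrep : K.s a β =
      ∑ i, (K.coordZ β i - K.pair a β * (Pi.single a 1 : Fin n → ℤ) i) • K.alpha i := by
    rw [s_apply]
    nth_rewrite 1 [K.coordZ_spec hq]
    rw [K.smul_alpha_rep (K.pair a β) a, ← Finset.sum_sub_distrib]
    exact Finset.sum_congr rfl fun i _ => (sub_smul _ _ _).symm
  have hco := K.coordZ_eq hrep
  have hsq : K.InQZ (K.s a β) := ⟨_, hrep⟩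
  obtain ⟨hq2, hc2⟩ := K.mem_QP_iff.mp hneg
  have hle : ∀ l, K.coordZ (K.s a β) l ≤ 0 := by
    intro l
    have h3 := hc2 l
    rw [K.coordZ_neg hsq] at h3
    simpa using h3
  have hzero : ∀ l, l ≠ a → K.coordZ β l = 0 := by
    intro l hl
    have h4 := hle l
    rw [hco] at h4
    simp [Pi.single_apply, hl] at h4
    have h5 := hc l
    omega
  have hβeq : β = K.coordZ β a • K.alpha a := by
    conv_lhs => rw [K.coordZ_spec hq]
    rw [Finset.sum_eq_single a]
    · intro b _ hb
      rw [hzero b hb, zero_smul]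
    · intro h
      exact absurd (Finset.mem_univ a) h
  refine ⟨K.coordZ β a, ?_, hβeq⟩
  rcases eq_or_lt_of_le (hc a) with h6 | h6
  · exfalso
    apply hβ0
    rw [hβeq, ← h6, zero_smul]
  · omega

lemma exists_crossing {P : ℕ → Prop} {m : ℕ} (h0 : ¬ P 0) (hm : P m) :
    ∃ t, t < m ∧ ¬ P t ∧ P (t + 1) := by
  classical
  have hne : {t | P t}.Nonempty := ⟨m, hm⟩
  have ht0 : P (sInf {t | P t}) := Nat.sInf_mem hne
  have h1 : sInf {t | P t} ≠ 0 := fun h => h0 (h ▸ ht0)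
  have h2 : sInf {t | P t} ≤ m := Nat.sInf_le hm
  refine ⟨sInf {t | P t} - 1, ?_, ?_, ?_⟩
  · omega
  · intro hHP
    have h4 : sInf {t | P t} ≤ sInf {t | P t} - 1 :=
      Nat.sInf_le (show (sInf {t | P t} - 1) ∈ {t | P t} from hHP)
    omega
  · have h3 : sInf {t | P t} - 1 + 1 = sInf {t | P t} := by omega
    rw [h3]
    exact ht0

lemma no_mixed_root {l a : Fin n} (hne : l ≠ a) {e : ℤ} (he : e < 0)
    (hm : K.mult (K.alpha l + e • K.alpha a) ≠ 0) : False := by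
  have hrep : K.alpha l + e • K.alpha a =
      ∑ i, ((Pi.single l 1 : Fin n → ℤ) i + e * (Pi.single a 1 : Fin n → ℤ) i) • K.alpha i := by
    nth_rewrite 1 [← K.sum_single_smul l]
    rw [K.smul_alpha_rep e a, ← Finset.sum_add_distrib]
    exact Finset.sum_congr rfl fun i _ => (add_smul _ _ _).symm
  have hco := K.coordZ_eq hrep
  have hβ0 : K.alpha l + e • K.alpha a ≠ 0 := by
    intro h
    have h2 : K.coordZ (K.alpha l + e • K.alpha a) l = 0 := by
      rw [h, K.coordZ_zero]
      rfl
    rw [hco] at h2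
    simp [Pi.single_apply, hne] at h2
  rcases K.root_dichotomy hm hβ0 with hp | hp
  · have h7 := (K.mem_QP_iff.mp hp).2 a
    rw [hco] at h7
    simp [Pi.single_apply, Ne.symm hne] at h7
    omega
  · have h7 := (K.mem_QP_iff.mp hp).2 l
    rw [K.coordZ_neg ⟨_, hrep⟩] at h7
    rw [hco] at h7
    simp [Pi.single_apply, hne] at h7

/-- No nontrivial element of the Weyl group permutes the simple roots. -/
lemma fixes_alpha_of_perm : ∀ m : ℕ, ∀ l : List (Fin n), l.length = m →
    (∀ j, ∃ k, K.wp l (K.alpha j) = K.alpha k) → ∀ j, K.wp l (K.alpha j) = K.alpha j := by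
  intro m
  induction m using Nat.strong_induction_on with
  | _ m ih =>
    intro l hlen hperm
    rcases l.eq_nil_or_concat' with rfl | ⟨L, b, rfl⟩
    · intro j
      rw [wp_nil, AddAut_one_apply]
    · have hLlen : L.length + 1 = m := by simpa using hlen
      have hwl : K.wp (L ++ [b]) = K.wp L * K.s b := by
        rw [wp_append, wp_singleton]
      obtain ⟨k0, hk0⟩ := hperm b
      have hsb : K.s b (K.alpha b) = -(K.alpha b) := by
        rw [s_apply, K.pair_self, two_zsmul]
        abel
      have hγ0 : K.wp L (K.alpha b) = -(K.alpha k0) := by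
        have h1 : (K.wp L) (K.s b (K.alpha b)) = K.alpha k0 := by
          rw [← AddAut_mul_apply, ← hwl]
          exact hk0
        rw [hsb, map_neg] at h1
        rw [← h1, neg_neg]
      have hP0 : ¬ (K.wp (L.drop 0) (K.alpha b) ∈ K.QP) := by
        rw [List.drop_zero, hγ0]
        intro h
        exact K.alpha_ne_zero k0 (K.eq_zero_of_mem_QP_neg_mem_QP (K.alpha_mem_QP k0) h)
      have hPm : K.wp (L.drop L.length) (K.alpha b) ∈ K.QP := by
        rw [List.drop_length, wp_nil, AddAut_one_apply]
        exact K.alpha_mem_QP b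
      obtain ⟨t, htm, hPt, hPt1⟩ :=
        exists_crossing (P := fun t => K.wp (L.drop t) (K.alpha b) ∈ K.QP) hP0 hPm
      set a : Fin n := L[t] with ha
      have hdrop : L.drop t = a :: L.drop (t + 1) := List.drop_eq_getElem_cons htm
      set u := K.wp (L.drop (t + 1)) with hu
      have huW : u ∈ K.Wgrp := K.wp_mem _
      have hstep : K.wp (L.drop t) (K.alpha b) = K.s a (u (K.alpha b)) := by
        rw [hdrop, wp_cons, AddAut_mul_apply]
      have hne1 : u (K.alpha b) ≠ 0 := by
        intro h
        apply K.alpha_ne_zero b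
        have h2 := congrArg u.symm h
        rw [AddEquiv.symm_apply_apply, map_zero] at h2
        exact h2
      have hneg : -(K.s a (u (K.alpha b))) ∈ K.QP := by
        rw [← hstep]
        have hr : K.mult (K.wp (L.drop t) (K.alpha b)) ≠ 0 := by
          rw [K.mult_wp, K.mult_simple]
          exact one_ne_zero
        have hz : K.wp (L.drop t) (K.alpha b) ≠ 0 := by
          intro h
          apply K.alpha_ne_zero b
          have h2 := congrArg (K.wp (L.drop t)).symm h
          rw [AddEquiv.symm_apply_apply, map_zero] at h2
          exact h2
        rcases K.root_dichotomy hr hz with h | h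
        · exact absurd h hPt
        · exact h
      obtain ⟨c, hc1, hceq⟩ := K.eq_smul_alpha_of_s_neg a hPt1 hne1 hneg
      have huα : u (K.alpha b) = c • K.alpha a := hceq
      have hcu : c • u⁻¹ (K.alpha a) = K.alpha b := by
        have h1 : u⁻¹ (u (K.alpha b)) = K.alpha b := by
          rw [← AddAut_mul_apply, inv_mul_cancel, AddAut_one_apply]
        rw [← h1, huα, map_zsmul]
      set ψ : V → ℤ := fun x => c * K.pair b (u⁻¹ x) - K.pair a x with hψ
      have hψa : ψ (K.alpha a) = 0 := by
        have h2 : c * K.pair b (u⁻¹ (K.alpha a)) = 2 := by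
          have h3 := congrArg (K.pair b) hcu
          rw [map_zsmul, K.pair_self, smul_eq_mul] at h3
          exact h3
        simp only [hψ]
        rw [h2, K.pair_self]
        ring
      set tt := K.s a * u * K.s b * u⁻¹ with htt
      have httW : tt ∈ K.Wgrp :=
        mul_mem (mul_mem (mul_mem (K.s_mem a) huW) (K.s_mem b)) (inv_mem huW)
      have httapp : ∀ x, tt x = x + ψ x • K.alpha a := by
        intro x
        have hx : u (u⁻¹ x) = x := by
          rw [← AddAut_mul_apply, mul_inv_cancel, AddAut_one_apply]
        simp only [htt, hψ]
        rw [AddAut_mul_apply, AddAut_mul_apply, AddAut_mul_apply]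
        rw [K.s_apply b (u⁻¹ x), map_sub, map_zsmul, hx, huα, K.s_apply]
        simp only [map_sub, map_zsmul, smul_eq_mul, K.pair_self]
        module
      have hψzero : ∀ l', ψ (K.alpha l') = 0 := by
        intro l'
        by_contra hz
        have hla : l' ≠ a := fun h => hz (h ▸ hψa)
        rcases lt_or_gt_of_ne hz with hneg2 | hpos
        · apply K.no_mixed_root hla hneg2
          rw [← httapp (K.alpha l'), K.mult_w httW, K.mult_simple]
          exact one_ne_zero
        · have h1 : tt (K.alpha l' - ψ (K.alpha l') • K.alpha a) = K.alpha l' := by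
            rw [httapp]
            have h2 : ψ (K.alpha l' - ψ (K.alpha l') • K.alpha a) = ψ (K.alpha l') := by
              have h3 : K.pair b (u⁻¹ (K.alpha a)) * c = 2 := by
                have h4 := congrArg (K.pair b) hcu
                rw [map_zsmul, K.pair_self, smul_eq_mul] at h4
                rw [mul_comm]
                exact h4
              simp only [hψ, map_sub, map_zsmul, smul_eq_mul, K.pair_self]
              linear_combination (K.pair a (K.alpha l') - c * K.pair b (u⁻¹ (K.alpha l'))) * h3
            rw [h2]
            abel
          have h2 : tt⁻¹ (K.alpha l') = K.alpha l' - ψ (K.alpha l') • K.alpha a := by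
            have h5 := congrArg (fun y => tt⁻¹ y) h1
            rw [← AddAut_mul_apply, inv_mul_cancel, AddAut_one_apply] at h5
            exact h5.symm
          apply K.no_mixed_root hla (show -ψ (K.alpha l') < 0 by omega)
          rw [neg_smul, ← sub_eq_add_neg, ← h2, K.mult_w (inv_mem httW), K.mult_simple]
          exact one_ne_zero
      have httfix : ∀ j', tt (K.alpha j') = K.alpha j' := by
        intro j'
        rw [httapp, hψzero, zero_smul, add_zero]
      have hdel : ∀ j', K.wp (L ++ [b]) (K.alpha j') =
          K.wp (L.take t ++ L.drop (t + 1)) (K.alpha j') := by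
        intro j'
        have hL : K.wp L = K.wp (L.take t) * (K.s a * u) := by
          conv_lhs => rw [← List.take_append_drop t L]
          rw [wp_append, hdrop, wp_cons]
        have hw2 : K.wp (L ++ [b]) = K.wp (L.take t) * (tt * u) := by
          rw [hwl, hL, htt]
          group
        rw [hw2]
        have h6 : tt (u (K.alpha j')) = u (K.alpha j') :=
          K.w_fixed_of_fixed_alpha httfix (K.inQZ_w_alpha huW j')
        have h7 : (K.wp (List.take t L) * (tt * u)) (K.alpha j')
            = (K.wp (List.take t L)) (tt (u (K.alpha j'))) := rfl
        rw [h7, h6, wp_append]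
        rfl
      have hlen2 : (L.take t ++ L.drop (t + 1)).length = m - 2 := by
        rw [List.length_append, List.length_take, List.length_drop,
          min_eq_left htm.le]
        omega
      have hihres := ih (m - 2) (by omega) _ hlen2 (fun j => by
        obtain ⟨k, hk⟩ := hperm j
        exact ⟨k, by rw [← hdel j]; exact hk⟩)
      intro j
      rw [hdel j, hihres j]


/-! ### More height lemmas -/

lemma inQZ_nsmul (b : ℕ) {a : V} (ha : K.InQZ a) : K.InQZ (b • a) := by
  rw [← natCast_zsmul]
  exact K.inQZ_zsmul _ ha

lemma htZ_nsmul (b : ℕ) {a : V} (ha : K.InQZ a) : K.htZ (b • a) = (b : ℤ) * K.htZ a := by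
  rw [← natCast_zsmul]
  exact K.htZ_zsmul _ ha

lemma htZ_zero : K.htZ (0 : V) = 0 := by
  rw [htZ, K.coordZ_zero]
  simp

lemma inQZ_sum {ι : Type} (s : Finset ι) (f : ι → V) :
    (∀ i ∈ s, K.InQZ (f i)) → K.InQZ (∑ i ∈ s, f i) := by
  refine Finset.cons_induction_on s (fun _ => by simpa using K.inQZ_zero) ?_
  intro a s ha ih hf
  rw [Finset.sum_cons]
  exact K.inQZ_add (hf a (Finset.mem_cons_self a s))
    (ih fun i hi => hf i (Finset.mem_cons.2 (Or.inr hi)))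

lemma htZ_sum {ι : Type} (s : Finset ι) (f : ι → V) :
    (∀ i ∈ s, K.InQZ (f i)) → K.htZ (∑ i ∈ s, f i) = ∑ i ∈ s, K.htZ (f i) := by
  refine Finset.cons_induction_on s (fun _ => by rw [Finset.sum_empty, Finset.sum_empty, K.htZ_zero]) ?_
  intro a s ha ih hf
  rw [Finset.sum_cons, Finset.sum_cons,
    K.htZ_add (hf a (Finset.mem_cons_self a s))
      (K.inQZ_sum s f fun i hi => hf i (Finset.mem_cons.2 (Or.inr hi))),
    ih fun i hi => hf i (Finset.mem_cons.2 (Or.inr hi))]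

lemma pow_fix {σ : AddAut V} {μ : V} (hσμ : σ μ = μ) : ∀ k : ℕ, (σ ^ k) μ = μ := by
  intro k
  induction k with
  | zero => rfl
  | succ k ih =>
      have h1 : (σ ^ (k + 1)) μ = (σ ^ k) (σ μ) := by rw [pow_succ]; rfl
      rw [h1, hσμ, ih]

/-! ### Existence of an odd element in a finite nontrivial stabilizer -/

lemma exists_odd_stab {μ ρ0 : V}
    (hpos : ∀ w ∈ K.Wgrp, ρ0 - w μ ∈ K.QP)
    (hfin : {w : AddAut V | w ∈ K.Wgrp ∧ w μ = μ}.Finite)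
    {σ : AddAut V} (hσW : σ ∈ K.Wgrp) (hσμ : σ μ = μ) (hσ1 : σ ≠ 1) :
    ∃ τ ∈ K.Wgrp, τ μ = μ ∧ K.sgn τ = -1 := by
  classical
  have hTne : {k : ℕ | ∃ w ∈ K.Wgrp, (K.htZ (ρ0 - w μ)).toNat = k}.Nonempty :=
    ⟨_, 1, one_mem _, rfl⟩
  obtain ⟨w0, hw0W, hw0⟩ := Nat.sInf_mem hTne
  have hmin : ∀ w ∈ K.Wgrp, K.htZ (ρ0 - w0 μ) ≤ K.htZ (ρ0 - w μ) := by
    intro w hw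
    have h1 : sInf {k : ℕ | ∃ w ∈ K.Wgrp, (K.htZ (ρ0 - w μ)).toNat = k}
        ≤ (K.htZ (ρ0 - w μ)).toNat := Nat.sInf_le ⟨w, hw, rfl⟩
    have h2 := K.htZ_nonneg (hpos w hw)
    have h3 := K.htZ_nonneg (hpos w0 hw0W)
    omega
  have hminν : ∀ w ∈ K.Wgrp, K.htZ (ρ0 - w0 μ) ≤ K.htZ (ρ0 - w (w0 μ)) := by
    intro w hw
    have h1 := hmin (w * w0) (mul_mem hw hw0W)
    rwa [AddAut_mul_apply] at h1
  have hQν : K.InQZ (ρ0 - w0 μ) := (K.mem_QP_iff.mp (hpos w0 hw0W)).1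
  have hdom : ∀ i, 0 ≤ K.pair i (w0 μ) := by
    intro i
    have hkey : ρ0 - K.s i (w0 μ) = (ρ0 - w0 μ) + K.pair i (w0 μ) • K.alpha i := by
      rw [s_apply]
      abel
    have h1 := hminν (K.s i) (K.s_mem i)
    rw [hkey, K.htZ_add hQν (K.inQZ_zsmul _ (K.inQZ_alpha i)),
      K.htZ_zsmul _ (K.inQZ_alpha i), K.htZ_alpha, mul_one] at h1
    omega
  by_cases hex : ∃ i, K.pair i (w0 μ) = 0
  · obtain ⟨i, hi⟩ := hex
    refine ⟨w0⁻¹ * (K.s i * w0), mul_mem (inv_mem hw0W) (mul_mem (K.s_mem i) hw0W), ?_, ?_⟩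
    · have hsν : K.s i (w0 μ) = w0 μ := by
        rw [s_apply, hi, zero_smul, sub_zero]
      have h1 : (w0⁻¹ * (K.s i * w0)) μ = w0⁻¹ (K.s i (w0 μ)) := rfl
      rw [h1, hsν, ← AddAut_mul_apply, inv_mul_cancel, AddAut_one_apply]
    · have hinv : K.sgn w0⁻¹ * K.sgn w0 = 1 := by
        rw [← K.sgn_mul (inv_mem hw0W) hw0W, inv_mul_cancel, K.sgn_one]
      rw [K.sgn_mul (inv_mem hw0W) (mul_mem (K.s_mem i) hw0W),
        K.sgn_mul (K.s_mem i) hw0W, K.sgn_s,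
        show K.sgn w0⁻¹ * (-1 * K.sgn w0) = -(K.sgn w0⁻¹ * K.sgn w0) by ring, hinv]
  · exfalso
    push_neg at hex
    have hdom1 : ∀ i, 1 ≤ K.pair i (w0 μ) := by
      intro i
      have h1 := hdom i
      have h2 := hex i
      omega
    set σ' := w0 * σ * w0⁻¹ with hσ'
    have hσ'W : σ' ∈ K.Wgrp := mul_mem (mul_mem hw0W hσW) (inv_mem hw0W)
    have hw0inv : w0⁻¹ (w0 μ) = μ := by
      rw [← AddAut_mul_apply, inv_mul_cancel, AddAut_one_apply]
    have hσ'ν : σ' (w0 μ) = w0 μ := by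
      have h1 : σ' (w0 μ) = w0 (σ (w0⁻¹ (w0 μ))) := rfl
      rw [h1, hw0inv, hσμ]
    have hσ'1 : σ' ≠ 1 := by
      intro h
      apply hσ1
      have h2 : σ = w0⁻¹ * σ' * w0 := by rw [hσ']; group
      rw [h2, h, mul_one, inv_mul_cancel]
    have himg : ∀ g : AddAut V, g ∈ K.Wgrp → g (w0 μ) = w0 μ →
        ∀ j, g (K.alpha j) ∈ K.QP := by
      intro g hgW hgν j
      have hroot : K.mult (g (K.alpha j)) ≠ 0 := by
        rw [K.mult_w hgW, K.mult_simple]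
        exact one_ne_zero
      have hne0 : g (K.alpha j) ≠ 0 := by
        intro h
        apply K.alpha_ne_zero j
        have h2 := congrArg g.symm h
        rw [AddEquiv.symm_apply_apply, map_zero] at h2
        exact h2
      rcases K.root_dichotomy hroot hne0 with h | h
      · exact h
      · exfalso
        have hgs : (g * K.s j) (w0 μ) = w0 μ - K.pair j (w0 μ) • g (K.alpha j) := by
          have h1 : (g * K.s j) (w0 μ) = g (K.s j (w0 μ)) := rfl
          rw [h1, s_apply, map_sub, map_zsmul, hgν]
        have hkey : ρ0 - (g * K.s j) (w0 μ) =
            (ρ0 - w0 μ) + K.pair j (w0 μ) • g (K.alpha j) := by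
          rw [hgs]
          abel
        have h1 := hminν (g * K.s j) (mul_mem hgW (K.s_mem j))
        have hQg : K.InQZ (g (K.alpha j)) := K.inQZ_w_alpha hgW j
        rw [hkey, K.htZ_add hQν (K.inQZ_zsmul _ hQg), K.htZ_zsmul _ hQg] at h1
        have h2 : 1 ≤ K.htZ (-(g (K.alpha j))) := K.one_le_htZ h (neg_ne_zero.mpr hne0)
        rw [K.htZ_neg hQg] at h2
        have h3 := hdom1 j
        nlinarith [h1, h2, h3]
    have hperm : ∀ j, ∃ k, σ' (K.alpha j) = K.alpha k := by
      have hsur : ∀ j, ∃ k, σ' (K.alpha k) = K.alpha j := by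
        intro j
        have hinvν : σ'⁻¹ (w0 μ) = w0 μ := by
          have h1 := congrArg (fun y => σ'⁻¹ y) hσ'ν
          rw [← AddAut_mul_apply, inv_mul_cancel, AddAut_one_apply] at h1
          exact h1.symm
        obtain ⟨bb, hbb⟩ := himg σ'⁻¹ (inv_mem hσ'W) hinvν j
        have hαj : K.alpha j = ∑ k, bb k • σ' (K.alpha k) := by
          have h1 : σ' (σ'⁻¹ (K.alpha j)) = K.alpha j := by
            rw [← AddAut_mul_apply, mul_inv_cancel, AddAut_one_apply]
          rw [← h1, hbb, map_sum]
          exact Finset.sum_congr rfl fun k _ => by rw [map_nsmul]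
        have hht : ∀ k, 1 ≤ K.htZ (σ' (K.alpha k)) := by
          intro k
          apply K.one_le_htZ (himg σ' hσ'W hσ'ν k)
          intro h
          apply K.alpha_ne_zero k
          have h2 := congrArg σ'.symm h
          rw [AddEquiv.symm_apply_apply, map_zero] at h2
          exact h2
        have hS : ∑ k, ((bb k : ℤ)) * K.htZ (σ' (K.alpha k)) = 1 := by
          have h1 : K.htZ (K.alpha j) = 1 := K.htZ_alpha j
          rw [hαj] at h1
          rw [K.htZ_sum _ _ (fun k _ => K.inQZ_nsmul _ (K.inQZ_w_alpha hσ'W k))] at h1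
          rw [← h1]
          exact Finset.sum_congr rfl fun k _ =>
            (K.htZ_nsmul (bb k) (K.inQZ_w_alpha hσ'W k)).symm
        obtain ⟨k0, hk00⟩ : ∃ k0, bb k0 ≠ 0 := by
          by_contra hall
          push_neg at hall
          apply K.alpha_ne_zero j
          rw [hαj]
          apply Finset.sum_eq_zero
          intro k _
          rw [hall k, zero_smul]
        have hsplit : ((bb k0 : ℤ)) * K.htZ (σ' (K.alpha k0)) +
            ∑ k ∈ Finset.univ.erase k0, ((bb k : ℤ)) * K.htZ (σ' (K.alpha k)) = 1 := by
          exact (Finset.add_sum_erase _ _ (Finset.mem_univ k0)).trans hS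
        have hterm0 : 1 ≤ ((bb k0 : ℤ)) * K.htZ (σ' (K.alpha k0)) := by
          have h1 : (1 : ℤ) ≤ (bb k0 : ℤ) := by
            have := hk00
            omega
          nlinarith [hht k0]
        have hrest_nonneg : ∀ k ∈ Finset.univ.erase k0,
            0 ≤ ((bb k : ℤ)) * K.htZ (σ' (K.alpha k)) := by
          intro k _
          have h1 : (0 : ℤ) ≤ (bb k : ℤ) := Int.natCast_nonneg _
          nlinarith [hht k]
        have hrest : ∀ k ∈ Finset.univ.erase k0,
            ((bb k : ℤ)) * K.htZ (σ' (K.alpha k)) = 0 := by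
          have hsum0 : ∑ k ∈ Finset.univ.erase k0,
              ((bb k : ℤ)) * K.htZ (σ' (K.alpha k)) = 0 := by
            have := Finset.sum_nonneg hrest_nonneg
            omega
          exact (Finset.sum_eq_zero_iff_of_nonneg hrest_nonneg).mp hsum0
        have hbbzero : ∀ k, k ≠ k0 → bb k = 0 := by
          intro k hk
          have h1 := hrest k (Finset.mem_erase.2 ⟨hk, Finset.mem_univ k⟩)
          rcases mul_eq_zero.mp h1 with h2 | h2
          · exact_mod_cast h2
          · exfalso
            have := hht k
            omega
        have hbb1 : bb k0 = 1 := by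
          have h1 : ((bb k0 : ℤ)) * K.htZ (σ' (K.alpha k0)) = 1 := by
            have h2 := Finset.sum_nonneg hrest_nonneg
            omega
          have h3 : (1 : ℤ) ≤ (bb k0 : ℤ) := by omega
          have h4 := hht k0
          nlinarith
        refine ⟨k0, ?_⟩
        have h9 : K.alpha j = bb k0 • σ' (K.alpha k0) := by
          rw [hαj, Finset.sum_eq_single k0]
          · intro k _ hk
            rw [hbbzero k hk, zero_smul]
          · intro h
            exact absurd (Finset.mem_univ k0) h
        rw [hbb1, one_smul] at h9
        exact h9.symm
      choose g hg using hsur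
      have hginj : Function.Injective g := by
        intro j1 j2 h
        have h1 := hg j1
        rw [h, hg j2] at h1
        exact (K.alpha_injective h1).symm
      have hgsurj : Function.Surjective g := Finite.injective_iff_surjective.mp hginj
      intro j
      obtain ⟨k, hk⟩ := hgsurj j
      refine ⟨k, ?_⟩
      rw [← hk]
      exact hg k
    obtain ⟨l, hl⟩ := K.exists_word hσ'W
    have hfix : ∀ j, σ' (K.alpha j) = K.alpha j := by
      have h1 := K.fixes_alpha_of_perm l.length l rfl (by rw [hl]; exact hperm)
      intro j
      rw [← hl]
      exact h1 j
    obtain ⟨N, hN1, hNσ⟩ : ∃ N, 1 ≤ N ∧ σ' ^ N = 1 := by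
      have hmap : ∀ k : ℕ, σ ^ k ∈ {w : AddAut V | w ∈ K.Wgrp ∧ w μ = μ} :=
        fun k => ⟨pow_mem hσW k, pow_fix hσμ k⟩
      have hfin2 : Finite {w : AddAut V | w ∈ K.Wgrp ∧ w μ = μ} := hfin.to_subtype
      obtain ⟨k1, k2, hne, heq⟩ := Finite.exists_ne_map_eq_of_infinite
        (fun k : ℕ => (⟨σ ^ k, hmap k⟩ : {w : AddAut V | w ∈ K.Wgrp ∧ w μ = μ}))
      have heq2 : σ ^ k1 = σ ^ k2 := congrArg Subtype.val heq
      have key : ∀ a b : ℕ, a < b → σ ^ a = σ ^ b → σ' ^ (b - a) = 1 := by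
        intro a b hab hpow2
        have h3 : σ ^ a * σ ^ (b - a) = σ ^ a * 1 := by
          rw [← pow_add, mul_one, show a + (b - a) = b by omega]
          exact hpow2.symm
        have h4 := mul_left_cancel h3
        rw [hσ', conj_pow, h4, mul_one, mul_inv_cancel]
      rcases Nat.lt_or_ge k1 k2 with hlt | hge
      · exact ⟨k2 - k1, by omega, key k1 k2 hlt heq2⟩
      · have hlt2 : k2 < k1 := by omega
        exact ⟨k1 - k2, by omega, key k2 k1 hlt2 heq2.symm⟩
    apply hσ'1
    have hfixQ : ∀ x, K.InQZ x → σ' x = x := fun x hx =>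
      K.w_fixed_of_fixed_alpha hfix hx
    have hpow : ∀ (k : ℕ) (x : V), (σ' ^ k) x = x + (k : ℤ) • (σ' x - x) := by
      intro k
      induction k with
      | zero => intro x; simp; rfl
      | succ k ihk =>
          intro x
          have hd : K.InQZ (σ' x - x) := K.inQZ_w_sub hσ'W x
          have h8 : (σ' ^ (k + 1)) x = (σ' ^ k) (σ' x) := by rw [pow_succ]; rfl
          rw [h8, ihk (σ' x)]
          have h9 : σ' (σ' x) - σ' x = σ' x - x := by
            have h10 := hfixQ (σ' x - x) hd
            rw [map_sub] at h10
            exact h10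
          rw [h9]
          have h11 : σ' x = x + (σ' x - x) := by abel
          nth_rewrite 1 [h11]
          push_cast
          rw [add_smul, one_smul]
          abel
    ext x
    have h12 : (σ' ^ N) x = x := by rw [hNσ]; rfl
    rw [hpow N x] at h12
    have h13 : (N : ℤ) • (σ' x - x) = 0 := by
      have := add_eq_left.mp h12
      exact this
    have hd : K.InQZ (σ' x - x) := K.inQZ_w_sub hσ'W x
    have h14 : K.coordZ ((N : ℤ) • (σ' x - x)) = fun i => (N : ℤ) * K.coordZ (σ' x - x) i :=
      K.coordZ_zsmul _ hd
    rw [h13, K.coordZ_zero] at h14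
    have h15 : σ' x - x = 0 := by
      rw [K.coordZ_spec hd]
      apply Finset.sum_eq_zero
      intro i _
      have h17 := congrFun h14 i
      simp only [Pi.zero_apply] at h17
      have h18 : K.coordZ (σ' x - x) i = 0 := by
        rcases mul_eq_zero.mp h17.symm with h | h
        · exfalso
          omega
        · exact h
      rw [h18, zero_smul]
    have h19 : σ' x = x := by
      have := sub_eq_zero.mp h15
      exact this
    rw [h19]
    rfl

end KacMoody

/-- **Lemma (non-vanishing of `ξ^λ`).**
For `λ ∈ Q' = ⋂_{w ∈ W} w∘Q⁻`, the formal sum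
`ξ^λ = Σ_{w ∈ W} (-1)^{ℓ(w)} e^{w∘λ}` is non-zero (i.e. some coefficient is non-zero)
if and only if the stabilizer `W_λ^∘ = {w ∈ W : w∘λ = λ}` of `λ` under the circle
action is trivial. -/
theorem xi_ne_zero_iff_trivial_stabilizer
    (n : ℕ) (V : Type) [AddCommGroup V] (K : KacMoody n V)
    (ρ : V) (hρ : ∀ i, K.pair i ρ = 1) :
    ∀ lam ∈ K.Qprime ρ,
      ((∃ v : V, K.xiFun ρ lam v ≠ 0) ↔
        (∀ w ∈ K.Wgrp, w (lam + ρ) - ρ = lam → w = 1)) := by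
  intro lam hlam
  have hpos : ∀ w ∈ K.Wgrp, ρ - w (lam + ρ) ∈ K.QP := by
    intro w hw
    have h1 := hlam w hw
    have h2 : ρ - w (lam + ρ) = -(w (lam + ρ) - ρ) := by abel
    rw [h2]
    exact h1
  constructor
  · rintro ⟨v, hv⟩ w hwW hwfix
    by_contra hw1
    apply hv
    have hwμ : w (lam + ρ) = lam + ρ := by
      rw [sub_eq_iff_eq_add] at hwfix
      exact hwfix
    show (∑ᶠ u ∈ {u : AddAut V | u ∈ K.Wgrp ∧ u (lam + ρ) - ρ = v}, (-1 : ℤ) ^ K.len u) = 0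
    set S := {u : AddAut V | u ∈ K.Wgrp ∧ u (lam + ρ) - ρ = v} with hSdef
    by_cases hSfin : S.Finite
    · rcases Set.eq_empty_or_nonempty S with hS | hS
      · rw [hS, finsum_mem_empty]
      · obtain ⟨w1, hw1S⟩ := hS
        have hstabfin : {u : AddAut V | u ∈ K.Wgrp ∧ u (lam + ρ) = lam + ρ}.Finite := by
          have hsub : {u : AddAut V | u ∈ K.Wgrp ∧ u (lam + ρ) = lam + ρ} ⊆
              (fun u => w1 * u) ⁻¹' S := by
            rintro u ⟨huW, huμ⟩
            refine ⟨mul_mem hw1S.1 huW, ?_⟩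
            show (w1 * u) (lam + ρ) - ρ = v
            rw [AddAut_mul_apply, huμ]
            exact hw1S.2
          exact Set.Finite.subset
            (Set.Finite.preimage (Set.injOn_of_injective (mul_right_injective w1)) hSfin) hsub
        obtain ⟨τ, hτW, hτμ, hτsgn⟩ := K.exists_odd_stab hpos hstabfin hwW hwμ hw1
        rw [finsum_mem_eq_finite_toFinset_sum _ hSfin]
        have hτinv : τ⁻¹ (lam + ρ) = lam + ρ := by
          have h1 := congrArg (fun y => τ⁻¹ y) hτμ
          rw [← AddAut_mul_apply, inv_mul_cancel, AddAut_one_apply] at h1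
          exact h1.symm
        have hmemT : ∀ u ∈ hSfin.toFinset, u * τ ∈ hSfin.toFinset := by
          intro u hu
          rw [Set.Finite.mem_toFinset] at hu ⊢
          refine ⟨mul_mem hu.1 hτW, ?_⟩
          show (u * τ) (lam + ρ) - ρ = v
          rw [AddAut_mul_apply, hτμ]
          exact hu.2
        have hmemT' : ∀ u ∈ hSfin.toFinset, u * τ⁻¹ ∈ hSfin.toFinset := by
          intro u hu
          rw [Set.Finite.mem_toFinset] at hu ⊢
          refine ⟨mul_mem hu.1 (inv_mem hτW), ?_⟩
          show (u * τ⁻¹) (lam + ρ) - ρ = v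
          rw [AddAut_mul_apply, hτinv]
          exact hu.2
        have hbij : ∑ u ∈ hSfin.toFinset, ((-1 : ℤ) ^ K.len (u * τ)) =
            ∑ u ∈ hSfin.toFinset, ((-1 : ℤ) ^ K.len u) := by
          refine Finset.sum_nbij' (fun u => u * τ) (fun u => u * τ⁻¹) hmemT hmemT'
            ?_ ?_ ?_
          · intro u _
            show u * τ * τ⁻¹ = u
            rw [mul_assoc, mul_inv_cancel, mul_one]
          · intro u _
            show u * τ⁻¹ * τ = u
            rw [mul_assoc, inv_mul_cancel, mul_one]
          · intro u _
            rfl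
        have hkey : ∀ u ∈ hSfin.toFinset, (-1 : ℤ) ^ K.len u = -((-1 : ℤ) ^ K.len (u * τ)) := by
          intro u hu
          rw [Set.Finite.mem_toFinset] at hu
          have huW := hu.1
          have h5 : K.sgn (u * τ) = -K.sgn u := by
            rw [K.sgn_mul huW hτW, hτsgn]
            ring
          rw [← K.sgn_eq_len huW, ← K.sgn_eq_len (mul_mem huW hτW), h5]
          ring
        have hfinal : ∑ u ∈ hSfin.toFinset, ((-1 : ℤ) ^ K.len u) =
            -∑ u ∈ hSfin.toFinset, ((-1 : ℤ) ^ K.len u) := by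
          calc ∑ u ∈ hSfin.toFinset, ((-1 : ℤ) ^ K.len u)
              = ∑ u ∈ hSfin.toFinset, -((-1 : ℤ) ^ K.len (u * τ)) :=
                Finset.sum_congr rfl hkey
            _ = -∑ u ∈ hSfin.toFinset, ((-1 : ℤ) ^ K.len (u * τ)) := by
                rw [← Finset.sum_neg_distrib]
            _ = -∑ u ∈ hSfin.toFinset, ((-1 : ℤ) ^ K.len u) := by rw [hbij]
        omega
    · apply finsum_mem_eq_zero_of_infinite
      have h6 : S ∩ Function.support (fun u : AddAut V => (-1 : ℤ) ^ K.len u) = S := by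
        apply Set.inter_eq_self_of_subset_left
        intro u _
        simp only [Function.mem_support]
        exact pow_ne_zero (K.len u) (by norm_num : (-1 : ℤ) ≠ 0)
      rw [h6]
      exact hSfin
  · intro htriv
    refine ⟨lam, ?_⟩
    have hSeq : {u : AddAut V | u ∈ K.Wgrp ∧ u (lam + ρ) - ρ = lam} = {1} := by
      ext u
      constructor
      · rintro ⟨huW, huv⟩
        exact htriv u huW huv
      · intro hu
        rw [Set.mem_singleton_iff] at hu
        subst hu
        refine ⟨one_mem _, ?_⟩
        rw [AddAut_one_apply]
        abel
    show (∑ᶠ u ∈ {u : AddAut V | u ∈ K.Wgrp ∧ u (lam + ρ) - ρ = lam}, (-1 : ℤ) ^ K.len u) ≠ 0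
    rw [hSeq, finsum_mem_singleton, K.len_one, pow_zero]
    norm_num
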